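/- (Theorem of Hillen–Othmer, part (a).) Under assumptions (T1), (T2) and (T4), μ = 0 is an eigenvalue of the turning operator 𝓛 : L²(V) → L²(V) with eigenfunction f(v) ≡ 1, and it is geometrically simple: the kernel of 𝓛 is exactly the one-dimensional span of the constant function 1. -/

import Mathlib

open MeasureTheory Filter

section Aux

variable {α : Type*} [MeasurableSpace α] {μ : Measure α}

private lemma aux_int_mul {f g : α → ℝ} (hf : MemLp f 2 μ) (hg : MemLp g 2 μ) :
    Integrable (fun x => f x * g x) μ := by
  have h : MemLp (f • g) 1 μ :=
    by haveI : ENNReal.HolderTriple 2 2 1 := ⟨by rw [ENNReal.inv_two_add_inv_two, inv_one]⟩; exact hg.smul hf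
  rw [← memLp_one_iff_integrable]
  exact h

private lemma aux_snd [IsFiniteMeasure μ] {h : α → ℝ} (hh : MemLp h 2 μ) :
    MemLp (fun z : α × α => h z.2) 2 (μ.prod μ) := by
  have h2 : MemLp h 2 (Measure.map Prod.snd (μ.prod μ)) := by
    rw [Measure.map_snd_prod]
    exact hh.smul_measure (measure_ne_top μ _)
  exact (memLp_map_measure_iff h2.aestronglyMeasurable measurable_snd.aemeasurable).mp h2

private lemma aux_sections [SFinite μ] {T : α → α → ℝ}
    (hTm : Measurable (Function.uncurry T))
    (hTsq : Integrable (fun z : α × α => T z.1 z.2 ^ 2) (μ.prod μ)) :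
    ∀ᵐ v ∂μ, MemLp (T v) 2 μ := by
  filter_upwards [hTsq.prod_right_ae] with v hv
  exact (memLp_two_iff_integrable_sq (hTm.of_uncurry_left.aestronglyMeasurable)).mpr hv

/-- The sign lemma: any `L²` fixed point of the kernel operator has a.e. constant sign. -/
private lemma aux_sign [IsFiniteMeasure μ] (hμ : μ ≠ 0)
    {T : α → α → ℝ} {η₀ φ : α → ℝ}
    (hTm : Measurable (Function.uncurry T))
    (hTnn : ∀ᵐ z ∂μ.prod μ, 0 ≤ T z.1 z.2)
    (hcol : ∀ᵐ v' ∂μ, ∫ v, T v v' ∂μ = 1)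
    (hTsq : Integrable (fun z : α × α => T z.1 z.2 ^ 2) (μ.prod μ))
    (hη₀nn : ∀ᵐ v ∂μ, 0 ≤ η₀ v) (hη₀ne : ¬ η₀ =ᵐ[μ] 0)
    (hφpos : ∀ᵐ v ∂μ, 0 < φ v)
    (hlow : ∀ᵐ z ∂μ.prod μ, η₀ z.1 * φ z.2 ≤ T z.1 z.2)
    {q : α → ℝ} (hq : MemLp q 2 μ)
    (hfix : q =ᵐ[μ] fun v => ∫ v', T v v' * q v' ∂μ) :
    (∀ᵐ v ∂μ, 0 ≤ q v) ∨ (∀ᵐ v ∂μ, q v ≤ 0) := by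
  haveI : (ae μ).NeBot := ae_neBot.2 hμ
  have habs : MemLp (fun v => |q v|) 2 μ := by
    simpa [Real.norm_eq_abs] using hq.norm
  have hsec2 := aux_sections hTm hTsq
  have hsecnn : ∀ᵐ v ∂μ, ∀ᵐ v' ∂μ, 0 ≤ T v v' := Measure.ae_ae_of_ae_prod hTnn
  have hseclow : ∀ᵐ v ∂μ, ∀ᵐ v' ∂μ, η₀ v * φ v' ≤ T v v' := Measure.ae_ae_of_ae_prod hlow
  have hTmem : MemLp (fun z : α × α => T z.1 z.2) 2 (μ.prod μ) :=
    (memLp_two_iff_integrable_sq hTm.aestronglyMeasurable).mpr hTsq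
  have hprodInt : Integrable (fun z : α × α => T z.1 z.2 * |q z.2|) (μ.prod μ) :=
    aux_int_mul hTmem (aux_snd habs)
  set g : α → ℝ := fun v => ∫ v', T v v' * |q v'| ∂μ with hg_def
  have hg_int : Integrable g μ := hprodInt.integral_prod_left
  have hIabs : ∀ᵐ v ∂μ, Integrable (fun v' => T v v' * |q v'|) μ := by
    filter_upwards [hsec2] with v hv using aux_int_mul hv habs
  have hIq : ∀ᵐ v ∂μ, Integrable (fun v' => T v v' * q v') μ := by
    filter_upwards [hsec2] with v hv using aux_int_mul hv hq
  have hle : ∀ᵐ v ∂μ, |q v| ≤ g v := by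
    filter_upwards [hfix, hsecnn] with v hv hnn
    calc |q v| = |∫ v', T v v' * q v' ∂μ| := by rw [hv]
    _ ≤ ∫ v', |T v v'| * |q v'| ∂μ := by
        simpa [Real.norm_eq_abs, abs_mul] using
          norm_integral_le_integral_norm (μ := μ) (fun v' => T v v' * q v')
    _ = g v := by
        refine integral_congr_ae ?_
        filter_upwards [hnn] with v' h
        rw [abs_of_nonneg h]
  have hswap : ∫ v, g v ∂μ = ∫ v', |q v'| ∂μ := by
    have h1 : ∫ v, g v ∂μ = ∫ v', ∫ v, T v v' * |q v'| ∂μ ∂μ :=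
      integral_integral_swap (f := fun v v' => T v v' * |q v'|) (by exact hprodInt)
    rw [h1]
    refine integral_congr_ae ?_
    filter_upwards [hcol] with v' h
    rw [integral_mul_const, h, one_mul]
  have hgq : g =ᵐ[μ] fun v => |q v| := by
    have hnn : 0 ≤ᵐ[μ] fun v => g v - |q v| := by
      filter_upwards [hle] with v h
      simpa using sub_nonneg.2 h
    have hint : Integrable (fun v => g v - |q v|) μ :=
      hg_int.sub (habs.integrable one_le_two)
    have hzero : ∫ v, (g v - |q v|) ∂μ = 0 := by
      rw [integral_sub hg_int (habs.integrable one_le_two), hswap, sub_self]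
    have h0 := (integral_eq_zero_iff_of_nonneg_ae hnn hint).mp hzero
    filter_upwards [h0] with v h
    have : g v - |q v| = 0 := h
    linarith
  have hfreq : ∃ᵐ v ∂μ, 0 < η₀ v := by
    by_contra hcon
    rw [not_frequently] at hcon
    exact hη₀ne (by filter_upwards [hcon, hη₀nn] with v h1 h2
                    exact le_antisymm (not_lt.1 h1) h2)
  obtain ⟨v₀, hv₀η, hnn₀, hlow₀, hgq₀, hfix₀, hIq₀, hIabs₀⟩ :=
    (hfreq.and_eventually
      (hsecnn.and (hseclow.and (hgq.and (hfix.and (hIq.and hIabs)))))).exists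
  have hpos₀ : ∀ᵐ v' ∂μ, 0 < T v₀ v' := by
    filter_upwards [hlow₀, hφpos] with v' h1 h2
    exact lt_of_lt_of_le (mul_pos hv₀η h2) h1
  set I : ℝ := ∫ v', T v₀ v' * q v' ∂μ with hI_def
  have hgI : ∫ v', T v₀ v' * |q v'| ∂μ = |I| := by
    have h1 : g v₀ = |q v₀| := hgq₀
    rw [hfix₀] at h1
    exact h1
  rcases le_total 0 I with hI | hI
  · left
    have hzero : ∫ v', T v₀ v' * (|q v'| - q v') ∂μ = 0 := by
      simp only [mul_sub]
      rw [integral_sub hIabs₀ hIq₀, hgI, abs_of_nonneg hI, ← hI_def, sub_self]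
    have hnn : 0 ≤ᵐ[μ] fun v' => T v₀ v' * (|q v'| - q v') := by
      filter_upwards [hnn₀] with v' h
      exact mul_nonneg h (sub_nonneg.2 (le_abs_self _))
    have hint : Integrable (fun v' => T v₀ v' * (|q v'| - q v')) μ := by
      simp only [mul_sub]; exact hIabs₀.sub hIq₀
    have hz := (integral_eq_zero_iff_of_nonneg_ae hnn hint).mp hzero
    filter_upwards [hz, hpos₀] with v' h1 h2
    have h3 : T v₀ v' * (|q v'| - q v') = 0 := h1
    rcases mul_eq_zero.mp h3 with h4 | h4
    · exact absurd h4 h2.ne'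
    · have := abs_nonneg (q v')
      linarith
  · right
    have hzero : ∫ v', T v₀ v' * (|q v'| + q v') ∂μ = 0 := by
      simp only [mul_add]
      rw [integral_add hIabs₀ hIq₀, hgI, abs_of_nonpos hI, ← hI_def, neg_add_cancel]
    have hnn : 0 ≤ᵐ[μ] fun v' => T v₀ v' * (|q v'| + q v') := by
      filter_upwards [hnn₀] with v' h
      exact mul_nonneg h (by linarith [neg_abs_le (q v')])
    have hint : Integrable (fun v' => T v₀ v' * (|q v'| + q v')) μ := by
      simp only [mul_add]; exact hIabs₀.add hIq₀
    have hz := (integral_eq_zero_iff_of_nonneg_ae hnn hint).mp hzero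
    filter_upwards [hz, hpos₀] with v' h1 h2
    have h3 : T v₀ v' * (|q v'| + q v') = 0 := h1
    rcases mul_eq_zero.mp h3 with h4 | h4
    · exact absurd h4 h2.ne'
    · have := abs_nonneg (q v')
      linarith [le_abs_self (q v')]

/-- Any `L²` fixed point of a doubly-stochastic positivity-bounded kernel is a.e. constant. -/
private lemma aux_const [IsFiniteMeasure μ] (hμ : μ ≠ 0)
    {T : α → α → ℝ} {η₀ φ : α → ℝ}
    (hTm : Measurable (Function.uncurry T))
    (hTnn : ∀ᵐ z ∂μ.prod μ, 0 ≤ T z.1 z.2)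
    (hcol : ∀ᵐ v' ∂μ, ∫ v, T v v' ∂μ = 1)
    (hTsq : Integrable (fun z : α × α => T z.1 z.2 ^ 2) (μ.prod μ))
    (hη₀nn : ∀ᵐ v ∂μ, 0 ≤ η₀ v) (hη₀ne : ¬ η₀ =ᵐ[μ] 0)
    (hφpos : ∀ᵐ v ∂μ, 0 < φ v)
    (hlow : ∀ᵐ z ∂μ.prod μ, η₀ z.1 * φ z.2 ≤ T z.1 z.2)
    (hrow : ∀ᵐ v ∂μ, ∫ v', T v v' ∂μ = 1)
    {p : α → ℝ} (hp : MemLp p 2 μ)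
    (hfix : p =ᵐ[μ] fun v => ∫ v', T v v' * p v' ∂μ) :
    ∃ c : ℝ, p =ᵐ[μ] fun _ => c := by
  haveI : (ae μ).NeBot := ae_neBot.2 hμ
  have hsec2 := aux_sections hTm hTsq
  have key : ∀ t : ℝ, (∀ᵐ v ∂μ, t ≤ p v) ∨ (∀ᵐ v ∂μ, p v ≤ t) := by
    intro t
    have hq : MemLp (fun v => p v - t) 2 μ := hp.sub (memLp_const t)
    have hqfix : (fun v => p v - t) =ᵐ[μ] fun v => ∫ v', T v v' * (p v' - t) ∂μ := by
      filter_upwards [hfix, hsec2, hrow] with v hv h2 h3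
      have hint1 : Integrable (fun v' => T v v' * p v') μ := aux_int_mul h2 hp
      have hint2 : Integrable (fun v' => T v v' * t) μ :=
        (h2.integrable one_le_two).mul_const t
      have e : ∫ v', T v v' * (p v' - t) ∂μ
          = (∫ v', T v v' * p v' ∂μ) - ∫ v', T v v' * t ∂μ := by
        simp only [mul_sub]
        exact integral_sub hint1 hint2
      rw [e, integral_mul_const, h3, one_mul, ← hv]
    rcases aux_sign hμ hTm hTnn hcol hTsq hη₀nn hη₀ne hφpos hlow hq hqfix with h | h
    · left; filter_upwards [h] with v hv; linarith
    · right; filter_upwards [h] with v hv; linarith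
  have hA : ∃ t : ℚ, ∀ᵐ v ∂μ, p v ≤ (t : ℝ) := by
    by_contra hcon
    push_neg at hcon
    have h1 : ∀ t : ℚ, ∀ᵐ v ∂μ, (t : ℝ) ≤ p v := fun t => (key t).resolve_right (not_eventually.mpr ((hcon t).mono fun _ h => not_le.2 h))
    obtain ⟨v, hv⟩ := (ae_all_iff.mpr h1).exists
    obtain ⟨t, ht⟩ := exists_rat_gt (p v)
    exact absurd (hv t) (not_le.2 ht)
  have hB : ∃ t : ℚ, ∀ᵐ v ∂μ, (t : ℝ) ≤ p v := by
    by_contra hcon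
    push_neg at hcon
    have h1 : ∀ t : ℚ, ∀ᵐ v ∂μ, p v ≤ (t : ℝ) := fun t => (key t).resolve_left (not_eventually.mpr ((hcon t).mono fun _ h => not_le.2 h))
    obtain ⟨v, hv⟩ := (ae_all_iff.mpr h1).exists
    obtain ⟨t, ht⟩ := exists_rat_lt (p v)
    exact absurd (hv t) (not_le.2 ht)
  obtain ⟨t₁, ht₁⟩ := hA
  obtain ⟨t₀, ht₀⟩ := hB
  set S : Set ℝ := {x | ∃ t : ℚ, (t : ℝ) = x ∧ ∀ᵐ v ∂μ, (t : ℝ) ≤ p v} with hS_def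
  have hSne : S.Nonempty := ⟨(t₀ : ℝ), t₀, rfl, ht₀⟩
  have hSbd : BddAbove S := by
    refine ⟨(t₁ : ℝ), ?_⟩
    rintro x ⟨t, rfl, ht⟩
    obtain ⟨v, h1, h2⟩ := (ht.and ht₁).exists
    exact le_trans h1 h2
  refine ⟨sSup S, ?_⟩
  have hA' : ∀ t : ℚ, ∀ᵐ v ∂μ, (∀ᵐ w ∂μ, (t : ℝ) ≤ p w) → (t : ℝ) ≤ p v := by
    intro t
    by_cases h : ∀ᵐ w ∂μ, (t : ℝ) ≤ p w
    · filter_upwards [h] with v hv _; exact hv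
    · filter_upwards with v h'; exact absurd h' h
  have hB' : ∀ t : ℚ, ∀ᵐ v ∂μ, (∀ᵐ w ∂μ, p w ≤ (t : ℝ)) → p v ≤ (t : ℝ) := by
    intro t
    by_cases h : ∀ᵐ w ∂μ, p w ≤ (t : ℝ)
    · filter_upwards [h] with v hv _; exact hv
    · filter_upwards with v h'; exact absurd h' h
  filter_upwards [ae_all_iff.mpr hA', ae_all_iff.mpr hB'] with v h1 h2
  by_contra hne
  rcases Ne.lt_or_gt hne with hlt | hgt
  · -- p v < sSup S
    obtain ⟨t, ht1, ht2⟩ := exists_rat_btwn hlt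
    have hBt : ¬ ∀ᵐ w ∂μ, p w ≤ (t : ℝ) := by
      intro hBt
      have hle : sSup S ≤ (t : ℝ) := by
        refine csSup_le hSne ?_
        rintro x ⟨s, rfl, hs⟩
        obtain ⟨w, hw1, hw2⟩ := (hs.and hBt).exists
        exact le_trans hw1 hw2
      exact absurd (lt_of_lt_of_le ht2 hle) (lt_irrefl _)
    have hAt : ∀ᵐ w ∂μ, (t : ℝ) ≤ p w := (key t).resolve_right hBt
    exact absurd (h1 t hAt) (not_le.2 ht1)
  · -- sSup S < p v
    obtain ⟨t, ht1, ht2⟩ := exists_rat_btwn hgt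
    have hAt : ¬ ∀ᵐ w ∂μ, (t : ℝ) ≤ p w := by
      intro hAt
      have hle : (t : ℝ) ≤ sSup S := le_csSup hSbd ⟨t, rfl, hAt⟩
      exact absurd (lt_of_le_of_lt hle ht1) (lt_irrefl _)
    have hBt : ∀ᵐ w ∂μ, p w ≤ (t : ℝ) := (key t).resolve_left hAt
    exact absurd (h2 t hBt) (not_le.2 ht2)

end Aux

open MeasureTheory

/-- (Hillen–Othmer, part (a).) Under (T1), (T2) and (T4), `0` is an eigenvalue of the
turning operator `𝓛` with eigenfunction the constant `1`, and it is geometrically simple: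
the kernel of `𝓛` is exactly the span of the constant function `1`. -/
theorem turning_operator_kernel_eq_span_one
    (n : ℕ) (V : Set (EuclideanSpace ℝ (Fin n)))
    (hVc : IsCompact V) (hVpos : 0 < volume V)
    (T : EuclideanSpace ℝ (Fin n) → EuclideanSpace ℝ (Fin n) → ℝ)
    (hTmeas : Measurable (Function.uncurry T))
    -- (T1)
    (hT1_nonneg : ∀ᵐ z ∂((volume.restrict V).prod (volume.restrict V)), 0 ≤ T z.1 z.2)
    (hT1_norm : ∀ᵐ v' ∂(volume.restrict V), ∫ v in V, T v v' = 1)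
    (hT1_sq : Integrable (fun z => (T z.1 z.2) ^ 2)
      ((volume.restrict V).prod (volume.restrict V)))
    -- (T2)
    (η₀ φ ψ : EuclideanSpace ℝ (Fin n) → ℝ)
    (hη₀ : MemLp η₀ 2 (volume.restrict V)) (hφ : MemLp φ 2 (volume.restrict V))
    (hψ : MemLp ψ 2 (volume.restrict V))
    (hη₀_nonneg : ∀ᵐ v ∂(volume.restrict V), 0 ≤ η₀ v)
    (hη₀_ne : ¬ (η₀ =ᵐ[volume.restrict V] 0))
    (hφ_pos : ∀ᵐ v ∂(volume.restrict V), 0 < φ v)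
    (hψ_pos : ∀ᵐ v ∂(volume.restrict V), 0 < ψ v)
    (hT2 : ∀ᵐ z ∂((volume.restrict V).prod (volume.restrict V)),
      η₀ z.1 * φ z.2 ≤ T z.1 z.2 ∧ T z.1 z.2 ≤ η₀ z.1 * ψ z.2)
    -- (T4)
    (hT4 : ∀ᵐ v ∂(volume.restrict V), ∫ v' in V, T v v' = 1)
    -- the integral operator 𝒯 and the turning operator 𝓛
    (𝒯 𝓛 : Lp ℝ 2 (volume.restrict V) →L[ℝ] Lp ℝ 2 (volume.restrict V))
    (h𝒯 : ∀ p : Lp ℝ 2 (volume.restrict V),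
      (𝒯 p : EuclideanSpace ℝ (Fin n) → ℝ) =ᵐ[volume.restrict V]
        fun v => ∫ v' in V, T v v' * p v')
    (lam : ℝ) (hlam : 0 < lam)
    (h𝓛 : 𝓛 = lam • (𝒯 - ContinuousLinearMap.id ℝ (Lp ℝ 2 (volume.restrict V))))
    -- the constant function 1 as an element of L²(V)
    (one : Lp ℝ 2 (volume.restrict V))
    (hone : (one : EuclideanSpace ℝ (Fin n) → ℝ) =ᵐ[volume.restrict V] fun _ => 1) :
    𝓛 one = 0 ∧ LinearMap.ker (𝓛 : Lp ℝ 2 (volume.restrict V) →ₗ[ℝ] Lp ℝ 2 (volume.restrict V)) = Submodule.span ℝ {one} := by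
  haveI : IsFiniteMeasure (volume.restrict V) := ⟨by
    rw [Measure.restrict_apply_univ]
    exact hVc.measure_lt_top⟩
  have hμne : (volume.restrict V) ≠ 0 := by
    intro h
    have h1 : (volume.restrict V) Set.univ = volume V := Measure.restrict_apply_univ V
    rw [h] at h1
    simp only [Measure.coe_zero, Pi.zero_apply] at h1
    exact absurd h1.symm hVpos.ne'
  have hlow : ∀ᵐ z ∂(volume.restrict V).prod (volume.restrict V), η₀ z.1 * φ z.2 ≤ T z.1 z.2 := by
    filter_upwards [hT2] with z hz using hz.1
  -- `𝒯 one = one`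
  have h𝒯one : 𝒯 one = one := by
    have e1 : (𝒯 one : EuclideanSpace ℝ (Fin n) → ℝ) =ᵐ[(volume.restrict V)] fun _ => 1 := by
      filter_upwards [h𝒯 one, hT4] with v h1 h2
      rw [h1]
      have e2 : ∫ v' in V, T v v' * one v' = ∫ v' in V, T v v' := by
        refine integral_congr_ae ?_
        filter_upwards [hone] with v' h
        rw [h, mul_one]
      rw [e2, h2]
    exact Lp.ext (e1.trans hone.symm)
  have hker : ∀ f : Lp ℝ 2 (volume.restrict V), 𝓛 f = 0 ↔ 𝒯 f = f := by
    intro f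
    rw [h𝓛]
    simp only [ContinuousLinearMap.smul_apply, ContinuousLinearMap.sub_apply,
      ContinuousLinearMap.id_apply, smul_eq_zero, sub_eq_zero]
    constructor
    · rintro (h | h)
      · exact absurd h hlam.ne'
      · exact h
    · exact fun h => Or.inr h
  have h𝓛one : 𝓛 one = 0 := (hker one).mpr h𝒯one
  refine ⟨h𝓛one, ?_⟩
  apply le_antisymm
  · intro f hf
    have hTf : 𝒯 f = f := (hker f).mp (LinearMap.mem_ker.mp hf)
    have hfix : (f : EuclideanSpace ℝ (Fin n) → ℝ) =ᵐ[(volume.restrict V)]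
        fun v => ∫ v' in V, T v v' * f v' := by
      have := h𝒯 f
      rwa [hTf] at this
    obtain ⟨c, hc⟩ := aux_const hμne hTmeas hT1_nonneg hT1_norm hT1_sq hη₀_nonneg hη₀_ne
      hφ_pos hlow hT4 (Lp.memLp f) hfix
    have hfc : f = c • one := by
      refine Lp.ext (hc.trans ?_)
      filter_upwards [Lp.coeFn_smul c one, hone] with v h1 h2
      rw [h1]
      simp [h2]
    rw [hfc]
    exact Submodule.smul_mem _ c (Submodule.mem_span_singleton_self one)
  · rw [Submodule.span_singleton_le_iff_mem]
    exact LinearMap.mem_ker.mpr h𝓛one
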